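/- There exist 3 disjoint families 𝓘₁, 𝓘₂, 𝓘₃ of dyadic intervals in ℝ whose union is the set of all dyadic intervals, such that for each j, if I₁, I₂ ∈ 𝓘ⱼ then 3I₁ and 3I₂ are either disjoint or one is contained in the other. -/

import Mathlib

/-- A dyadic interval in `ℝ`: an open interval `(j/2^k, (j+1)/2^k)` for integers `j, k`. -/
def IsDyadicInterval (I : Set ℝ) : Prop :=
  ∃ j k : ℤ, I = Set.Ioo ((j : ℝ) / 2 ^ k) (((j : ℝ) + 1) / 2 ^ k)

/-- For a bounded interval `I`, `dilateSet r I` is the open interval with the same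
center and `r` times the length. -/
noncomputable def dilateSet (r : ℝ) (I : Set ℝ) : Set ℝ :=
  Set.Ioo ((sInf I + sSup I) / 2 - r * (sSup I - sInf I) / 2)
    ((sInf I + sSup I) / 2 + r * (sSup I - sInf I) / 2)

namespace ThreeFamAux

/-- The class of the dyadic interval `(j/2^k, (j+1)/2^k)`. -/
def cls (j k : ℤ) : ℤ := (if Even k then j - 1 else 1 - j) % 3

lemma cls_nonneg (j k : ℤ) : 0 ≤ cls j k := Int.emod_nonneg _ (by norm_num)

lemma cls_lt (j k : ℤ) : cls j k < 3 := Int.emod_lt_of_pos _ (by norm_num)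

lemma pow2_mod3 (d : ℕ) : (2:ℤ)^d % 3 = if Even d then 1 else 2 := by
  induction d with
  | zero => simp
  | succ n ih =>
    rw [pow_succ]
    rcases Nat.even_or_odd n with h | h
    · simp [Nat.even_add_one, h] at ih ⊢
      omega
    · simp [Nat.even_add_one, Nat.not_even_iff_odd.2 h, h] at ih ⊢
      omega

lemma key {j k j' k' : ℤ} (hkk : k ≤ k') (h : cls j k = cls j' k') :
    (2 ^ (k' - k).toNat * (j - 1)) % 3 = (j' - 1) % 3 := by
  set d := (k' - k).toNat with hd
  have hdz : (d : ℤ) = k' - k := Int.toNat_of_nonneg (by omega)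
  have hpar : Even d ↔ (Even k ↔ Even k') := by
    rw [← Int.even_coe_nat, hdz, Int.even_sub]
    tauto
  unfold cls at h
  rw [Int.mul_emod, pow2_mod3]
  by_cases h1 : Even k <;> by_cases h2 : Even k' <;>
    simp only [h1, h2, if_true, if_false] at h <;>
    first
      | (rw [if_pos (by tauto : Even d)]; omega)
      | (rw [if_neg (by tauto : ¬ Even d)]; omega)

lemma endpoints_lt (j k : ℤ) : (j:ℝ)/2^k < ((j:ℝ)+1)/2^k := by
  have h : (0:ℝ) < 2 ^ k := zpow_pos two_pos k
  exact (div_lt_div_iff_of_pos_right h).2 (by linarith)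

lemma dilate_eq (j k : ℤ) :
    dilateSet 3 (Set.Ioo ((j:ℝ)/2^k) (((j:ℝ)+1)/2^k)) =
      Set.Ioo (((j:ℝ)-1)/2^k) (((j:ℝ)+2)/2^k) := by
  rw [dilateSet, csInf_Ioo (endpoints_lt j k), csSup_Ioo (endpoints_lt j k)]
  congr 1 <;> ring

lemma core {D : ℝ} (hD : 0 < D) {a b c : ℤ} (ha : a % 3 = c % 3)
    (hb : b % 3 = c % 3) :
    Disjoint (Set.Ioo ((a:ℝ)/D) ((b:ℝ)/D)) (Set.Ioo ((c:ℝ)/D) (((c:ℝ)+3)/D)) ∨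
      Set.Ioo ((c:ℝ)/D) (((c:ℝ)+3)/D) ⊆ Set.Ioo ((a:ℝ)/D) ((b:ℝ)/D) := by
  have mono : ∀ m n : ℤ, m ≤ n → (m:ℝ)/D ≤ (n:ℝ)/D := fun m n hmn =>
    (div_le_div_iff_of_pos_right hD).2 (by exact_mod_cast hmn)
  have hc3 : ((c:ℝ)+3)/D = ((c+3 : ℤ):ℝ)/D := by push_cast; ring
  by_cases h1 : c + 3 ≤ a
  · left
    rw [Set.disjoint_left]
    intro x hx hx'
    have := mono _ _ h1
    rw [← hc3] at this
    linarith [hx.1, hx'.2]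
  by_cases h2 : b ≤ c
  · left
    rw [Set.disjoint_left]
    intro x hx hx'
    have := mono _ _ h2
    linarith [hx.2, hx'.1]
  · right
    have hac : a ≤ c := by omega
    have hcb : c + 3 ≤ b := by omega
    apply Set.Ioo_subset_Ioo (mono _ _ hac)
    rw [hc3]
    exact mono _ _ hcb

lemma tripleIoo {j k j' k' : ℤ} (hkk : k ≤ k') (h : cls j k = cls j' k') :
    Disjoint (Set.Ioo (((j:ℝ)-1)/2^k) (((j:ℝ)+2)/2^k))
        (Set.Ioo (((j':ℝ)-1)/2^k') (((j':ℝ)+2)/2^k')) ∨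
      Set.Ioo (((j':ℝ)-1)/2^k') (((j':ℝ)+2)/2^k') ⊆
        Set.Ioo (((j:ℝ)-1)/2^k) (((j:ℝ)+2)/2^k) := by
  set d := (k' - k).toNat with hd
  have hdz : (d : ℤ) = k' - k := Int.toNat_of_nonneg (by omega)
  have h2k : (2:ℝ)^(k') = 2^k * 2^(d:ℕ) := by
    rw [← zpow_natCast (2:ℝ) d, ← zpow_add₀ (by norm_num : (2:ℝ) ≠ 0)]
    congr 1
    omega
  have hne : (2:ℝ)^k ≠ 0 := (zpow_pos two_pos k).ne'
  have hdne : (2:ℝ)^(d:ℕ) ≠ 0 := by positivity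
  have e1 : (((j:ℝ))-1)/2^k = (((2^d*(j-1) : ℤ)):ℝ)/2^(k':ℤ) := by
    rw [h2k]
    push_cast
    field_simp
  have e2 : (((j:ℝ))+2)/2^k = (((2^d*(j+2) : ℤ)):ℝ)/2^(k':ℤ) := by
    rw [h2k]
    push_cast
    field_simp
  have e3 : (((j':ℝ))-1)/2^(k':ℤ) = (((j'-1 : ℤ)):ℝ)/2^(k':ℤ) := by push_cast; ring
  have e4 : (((j':ℝ))+2)/2^(k':ℤ) = ((((j'-1:ℤ)):ℝ)+3)/2^(k':ℤ) := by push_cast; ring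
  rw [e1, e2, e3, e4]
  have ha : (2^d*(j-1)) % 3 = (j'-1) % 3 := key hkk h
  have hb : (2^d*(j+2)) % 3 = (j'-1) % 3 := by
    have hx : (2:ℤ)^d*(j+2) = 2^d*(j-1) + 3 * 2^d := by ring
    omega
  exact core (zpow_pos two_pos k') ha hb

lemma rep_unique {j k j' k' : ℤ}
    (h : Set.Ioo ((j:ℝ)/2^k) (((j:ℝ)+1)/2^k) = Set.Ioo ((j':ℝ)/2^k') (((j':ℝ)+1)/2^k')) :
    j = j' ∧ k = k' := by
  have h1 := endpoints_lt j k
  have h2 := endpoints_lt j' k'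
  have hInf : (j:ℝ)/2^k = (j':ℝ)/2^k' := by
    rw [← csInf_Ioo h1, ← csInf_Ioo h2, h]
  have hSup : ((j:ℝ)+1)/2^k = ((j':ℝ)+1)/2^k' := by
    rw [← csSup_Ioo h1, ← csSup_Ioo h2, h]
  have hlen : (1:ℝ)/2^k = 1/2^k' := by
    calc (1:ℝ)/2^k = ((j:ℝ)+1)/2^k - (j:ℝ)/2^k := by ring
    _ = ((j':ℝ)+1)/2^k' - (j':ℝ)/2^k' := by rw [hSup, hInf]
    _ = 1/2^k' := by ring
  have hkk : k = k' := by
    have hne : (2:ℝ)^k' ≠ 0 := (zpow_pos two_pos k').ne'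
    have hne' : (2:ℝ)^k ≠ 0 := (zpow_pos two_pos k).ne'
    have h2 : (2:ℝ)^k = 2^k' := by
      rw [div_eq_div_iff hne' hne] at hlen
      linarith
    exact zpow_right_injective₀ two_pos (by norm_num) h2
  subst hkk
  refine ⟨?_, rfl⟩
  have hne' : (2:ℝ)^k ≠ 0 := (zpow_pos two_pos k).ne'
  have : (j:ℝ) = (j':ℝ) := by
    field_simp at hInf
    exact_mod_cast hInf
  exact_mod_cast this

end ThreeFamAux

open ThreeFamAux in
/-- There exist `3` disjoint families `𝓘₁, 𝓘₂, 𝓘₃` of dyadic intervals in `ℝ` whose union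
is the set of all dyadic intervals, such that for each `j`, if `I₁, I₂ ∈ 𝓘ⱼ` then `3I₁`
and `3I₂` are either disjoint or one is contained in the other. -/
theorem exists_three_families_of_dyadic_intervals :
    ∃ F : Fin 3 → Set (Set ℝ),
      (∀ i j : Fin 3, i ≠ j → Disjoint (F i) (F j)) ∧
      (⋃ i, F i) = {I | IsDyadicInterval I} ∧
      ∀ i : Fin 3, ∀ I₁ ∈ F i, ∀ I₂ ∈ F i,
        Disjoint (dilateSet 3 I₁) (dilateSet 3 I₂) ∨
        dilateSet 3 I₁ ⊆ dilateSet 3 I₂ ∨ dilateSet 3 I₂ ⊆ dilateSet 3 I₁ := by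
  refine ⟨fun i => {I | ∃ j k : ℤ,
    I = Set.Ioo ((j:ℝ)/2^k) (((j:ℝ)+1)/2^k) ∧ cls j k = (i.val : ℤ)}, ?_, ?_, ?_⟩
  · intro i i' hne
    rw [Set.disjoint_left]
    rintro I ⟨j, k, hI, hc⟩ ⟨j', k', hI', hc'⟩
    obtain ⟨hj, hk⟩ := rep_unique (hI ▸ hI')
    apply hne
    apply Fin.ext
    have : (i.val : ℤ) = (i'.val : ℤ) := by rw [← hc, ← hc', hj, hk]
    exact_mod_cast this
  · ext I
    simp only [Set.mem_iUnion, Set.mem_setOf_eq, IsDyadicInterval]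
    constructor
    · rintro ⟨i, j, k, hI, _⟩
      exact ⟨j, k, hI⟩
    · rintro ⟨j, k, hI⟩
      refine ⟨⟨(cls j k).toNat, ?_⟩, j, k, hI, ?_⟩
      · have := cls_lt j k
        have := cls_nonneg j k
        omega
      · simp only
        exact (Int.toNat_of_nonneg (cls_nonneg j k)).symm
  · rintro i I₁ ⟨j, k, hI₁, hc₁⟩ I₂ ⟨j', k', hI₂, hc₂⟩
    have hcc : cls j k = cls j' k' := hc₁.trans hc₂.symm
    rw [hI₁, hI₂, dilate_eq, dilate_eq]
    rcases le_total k k' with hkk | hkk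
    · rcases tripleIoo hkk hcc with h | h
      · exact Or.inl h
      · exact Or.inr (Or.inr h)
    · rcases tripleIoo hkk hcc.symm with h | h
      · exact Or.inl h.symm
      · exact Or.inr (Or.inl h)
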